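/- There exists an absolute constant C > 0 such that for all reals λ > 0, γ > 0, ΔT > 0 and every natural number n, one has γ·ΔT·∑_{m=1}^{n} ((1+λΔT)^{−m} − e^{−λmΔT})² ≤ C·(γ/λ)·min(1, λΔT)². -/

import Mathlib

open Finset

private lemma pow_sub_pow_le_aux {a b : ℝ} (hb0 : 0 ≤ b) (hba : b ≤ a) :
    ∀ k : ℕ, a ^ (k + 1) - b ^ (k + 1) ≤ ((k : ℝ) + 1) * a ^ k * (a - b) := by
  intro k
  induction k with
  | zero => simp
  | succ k ih =>
    have ha0 : 0 ≤ a := hb0.trans hba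
    have hpow : b ^ (k + 1) ≤ a ^ (k + 1) := pow_le_pow_left₀ hb0 hba _
    have h1 : a * (a ^ (k + 1) - b ^ (k + 1)) ≤ a * (((k : ℝ) + 1) * a ^ k * (a - b)) :=
      mul_le_mul_of_nonneg_left ih ha0
    have h2 : b ^ (k + 1) * (a - b) ≤ a ^ (k + 1) * (a - b) :=
      mul_le_mul_of_nonneg_right hpow (sub_nonneg.2 hba)
    have key : a ^ (k + 2) - b ^ (k + 2)
        = a * (a ^ (k + 1) - b ^ (k + 1)) + b ^ (k + 1) * (a - b) := by ring
    calc a ^ (k + 2) - b ^ (k + 2)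
        = a * (a ^ (k + 1) - b ^ (k + 1)) + b ^ (k + 1) * (a - b) := key
      _ ≤ a * (((k : ℝ) + 1) * a ^ k * (a - b)) + a ^ (k + 1) * (a - b) := add_le_add h1 h2
      _ = ((k : ℝ) + 2) * a ^ (k + 1) * (a - b) := by ring
      _ = ((k + 1 : ℕ) + 1 : ℝ) * a ^ (k + 1) * (a - b) := by push_cast; ring

private lemma geom_sum_le_inv {q : ℝ} (hq0 : 0 ≤ q) (hq1 : q < 1) (n : ℕ) :
    ∑ j ∈ range n, q ^ j ≤ (1 - q)⁻¹ :=
  sum_le_hasSum _ (fun i _ => pow_nonneg hq0 i) (hasSum_geometric_of_lt_one hq0 hq1)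

private lemma mul_pow_le_inv {q : ℝ} (hq0 : 0 ≤ q) (hq1 : q < 1) (k : ℕ) :
    ((k : ℝ) + 1) * q ^ k ≤ (1 - q)⁻¹ := by
  have h1 : ((k : ℝ) + 1) * q ^ k = ∑ _j ∈ range (k + 1), q ^ k := by
    rw [Finset.sum_const, card_range, nsmul_eq_mul]; push_cast; ring
  rw [h1]
  calc ∑ _j ∈ range (k + 1), q ^ k ≤ ∑ j ∈ range (k + 1), q ^ j := by
        refine Finset.sum_le_sum fun j hj => ?_
        exact pow_le_pow_of_le_one hq0 hq1.le (Nat.lt_succ_iff.mp (Finset.mem_range.mp hj))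
    _ ≤ (1 - q)⁻¹ := geom_sum_le_inv hq0 hq1 _

private lemma sum_mul_pow_le {q : ℝ} (hq0 : 0 ≤ q) (hq1 : q < 1) (n : ℕ) :
    ∑ k ∈ range n, ((k : ℝ) + 1) * q ^ k ≤ ((1 - q) ^ 2)⁻¹ := by
  have hnorm : ‖q‖ < 1 := by rwa [Real.norm_eq_abs, abs_of_nonneg hq0]
  have h1 : HasSum (fun k : ℕ => (k : ℝ) * q ^ k) (q / (1 - q) ^ 2) :=
    hasSum_coe_mul_geometric_of_norm_lt_one hnorm
  have h2 : HasSum (fun k : ℕ => q ^ k) ((1 - q)⁻¹) :=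
    hasSum_geometric_of_lt_one hq0 hq1
  have h3 : HasSum (fun k : ℕ => ((k : ℝ) + 1) * q ^ k) (q / (1 - q) ^ 2 + (1 - q)⁻¹) := by
    have := h1.add h2
    convert this using 2 with k
    ring
  have hle : ∑ k ∈ range n, ((k : ℝ) + 1) * q ^ k ≤ q / (1 - q) ^ 2 + (1 - q)⁻¹ :=
    sum_le_hasSum _ (fun i _ => by positivity) h3
  have hq : (0 : ℝ) < 1 - q := by linarith
  have heq : q / (1 - q) ^ 2 + (1 - q)⁻¹ = ((1 - q) ^ 2)⁻¹ := by
    field_simp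
    ring
  linarith [hle, heq ▸ hle]

theorem stmt_4 :
    ∃ C : ℝ, 0 < C ∧ ∀ lam gam ΔT : ℝ, 0 < lam → 0 < gam → 0 < ΔT → ∀ n : ℕ,
      gam * ΔT * ∑ m ∈ Finset.Icc 1 n,
          (((1 + lam * ΔT) ^ m)⁻¹ - Real.exp (-(lam * m * ΔT))) ^ 2
        ≤ C * (gam / lam) * (min 1 (lam * ΔT)) ^ 2 := by
  refine ⟨8, by norm_num, ?_⟩
  intro lam gam ΔT hlam hgam hΔT n
  set x : ℝ := lam * ΔT with hx_def
  have hx : 0 < x := mul_pos hlam hΔT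
  have h1x : (0 : ℝ) < 1 + x := by linarith
  set a : ℝ := (1 + x)⁻¹ with ha_def
  set b : ℝ := Real.exp (-x) with hb_def
  have ha0 : 0 < a := inv_pos.2 h1x
  have ha1 : a < 1 := by
    rw [ha_def, inv_lt_one_iff₀]; right; linarith
  have hb0 : 0 < b := Real.exp_pos _
  have hba : b ≤ a := by
    rw [hb_def, ha_def, Real.exp_neg]
    exact inv_anti₀ h1x (by linarith [Real.add_one_le_exp x])
  -- rewrite the summand
  have hsummand : ∀ m ∈ Finset.Icc 1 n,
      (((1 + lam * ΔT) ^ m)⁻¹ - Real.exp (-(lam * m * ΔT))) ^ 2 = (a ^ m - b ^ m) ^ 2 := by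
    intro m _
    have h1 : ((1 + lam * ΔT) ^ m)⁻¹ = a ^ m := by rw [ha_def, inv_pow]
    have h2 : Real.exp (-(lam * m * ΔT)) = b ^ m := by
      rw [hb_def, ← Real.exp_nat_mul]
      congr 1
      push_cast
      ring
    rw [h1, h2]
  rw [Finset.sum_congr rfl hsummand]
  -- reindex to range
  have hreindex : ∑ m ∈ Finset.Icc 1 n, (a ^ m - b ^ m) ^ 2
      = ∑ k ∈ range n, (a ^ (k + 1) - b ^ (k + 1)) ^ 2 := by
    rw [← Finset.Ico_add_one_right_eq_Icc, Finset.sum_Ico_eq_sum_range]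
    simp [add_comm]
  rw [hreindex]
  have h1ma : 1 - a = x * a := by
    rw [ha_def]
    field_simp
    ring
  rcases le_total x 1 with hx1 | hx1
  · -- small x case
    have hmin : min 1 x = x := min_eq_right hx1
    have hab : a - b ≤ x ^ 2 := by
      have hblow : 1 - x ≤ b := by
        have := Real.add_one_le_exp (-x)
        rw [hb_def]; linarith
      have haup : a ≤ 1 - x + x ^ 2 := by
        have hmul : a * (1 + x) = 1 := inv_mul_cancel₀ (ne_of_gt h1x)
        nlinarith [pow_nonneg hx.le 3]
      linarith
    have hab0 : 0 ≤ a - b := sub_nonneg.2 hba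
    have hahalf : (1 : ℝ) / 2 ≤ a := by
      rw [ha_def]
      rw [div_le_iff₀ (by norm_num : (0:ℝ) < 2)]
      rw [inv_mul_eq_div, le_div_iff₀ h1x]
      linarith
    have h1ma_ge : x / 2 ≤ 1 - a := by
      rw [h1ma]; nlinarith
    have h1ma_pos : 0 < 1 - a := by linarith
    -- per-term bound
    have hterm : ∀ k ∈ range n, (a ^ (k + 1) - b ^ (k + 1)) ^ 2
        ≤ (1 - a)⁻¹ * x ^ 4 * (((k : ℝ) + 1) * a ^ k) := by
      intro k _
      have h1 : a ^ (k + 1) - b ^ (k + 1) ≤ ((k : ℝ) + 1) * a ^ k * (a - b) :=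
        pow_sub_pow_le_aux hb0.le hba k
      have h2 : a ^ (k + 1) - b ^ (k + 1) ≤ ((k : ℝ) + 1) * a ^ k * x ^ 2 := by
        calc a ^ (k + 1) - b ^ (k + 1) ≤ ((k : ℝ) + 1) * a ^ k * (a - b) := h1
          _ ≤ ((k : ℝ) + 1) * a ^ k * x ^ 2 := by
              apply mul_le_mul_of_nonneg_left hab
              positivity
      have h0 : 0 ≤ a ^ (k + 1) - b ^ (k + 1) :=
        sub_nonneg.2 (pow_le_pow_left₀ hb0.le hba _)
      have hsq : (a ^ (k + 1) - b ^ (k + 1)) ^ 2 ≤ (((k : ℝ) + 1) * a ^ k * x ^ 2) ^ 2 := by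
        apply pow_le_pow_left₀ h0 h2
      have hfact : (((k : ℝ) + 1) * a ^ k * x ^ 2) ^ 2
          = (((k : ℝ) + 1) * a ^ k) * (((k : ℝ) + 1) * a ^ k) * x ^ 4 := by ring
      have hone : ((k : ℝ) + 1) * a ^ k ≤ (1 - a)⁻¹ := mul_pow_le_inv ha0.le ha1 k
      calc (a ^ (k + 1) - b ^ (k + 1)) ^ 2 ≤ (((k : ℝ) + 1) * a ^ k * x ^ 2) ^ 2 := hsq
        _ = (((k : ℝ) + 1) * a ^ k) * ((((k : ℝ) + 1) * a ^ k) * x ^ 4) := by ring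
        _ ≤ (1 - a)⁻¹ * ((((k : ℝ) + 1) * a ^ k) * x ^ 4) := by
            apply mul_le_mul_of_nonneg_right hone
            positivity
        _ = (1 - a)⁻¹ * x ^ 4 * (((k : ℝ) + 1) * a ^ k) := by ring
    have hsum : ∑ k ∈ range n, (a ^ (k + 1) - b ^ (k + 1)) ^ 2
        ≤ (1 - a)⁻¹ * x ^ 4 * ((1 - a) ^ 2)⁻¹ := by
      calc ∑ k ∈ range n, (a ^ (k + 1) - b ^ (k + 1)) ^ 2
          ≤ ∑ k ∈ range n, (1 - a)⁻¹ * x ^ 4 * (((k : ℝ) + 1) * a ^ k) :=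
            Finset.sum_le_sum hterm
        _ = (1 - a)⁻¹ * x ^ 4 * ∑ k ∈ range n, ((k : ℝ) + 1) * a ^ k := by
            rw [← Finset.mul_sum]
        _ ≤ (1 - a)⁻¹ * x ^ 4 * ((1 - a) ^ 2)⁻¹ := by
            apply mul_le_mul_of_nonneg_left (sum_mul_pow_le ha0.le ha1 n)
            positivity
    have hfinal : (1 - a)⁻¹ * x ^ 4 * ((1 - a) ^ 2)⁻¹ ≤ 8 * x := by
      have h3 : (x / 2) ^ 3 ≤ (1 - a) ^ 3 := by
        apply pow_le_pow_left₀ (by positivity) h1ma_ge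
      have heq : (1 - a)⁻¹ * x ^ 4 * ((1 - a) ^ 2)⁻¹ = x ^ 4 / (1 - a) ^ 3 := by
        field_simp
      rw [heq]
      rw [div_le_iff₀ (by positivity)]
      nlinarith [pow_pos h1ma_pos 3]
    have hS : ∑ k ∈ range n, (a ^ (k + 1) - b ^ (k + 1)) ^ 2 ≤ 8 * x :=
      hsum.trans hfinal
    calc gam * ΔT * ∑ k ∈ range n, (a ^ (k + 1) - b ^ (k + 1)) ^ 2
        ≤ gam * ΔT * (8 * x) := by
          apply mul_le_mul_of_nonneg_left hS (by positivity)
      _ = 8 * (gam / lam) * (min 1 x) ^ 2 := by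
          rw [hmin, hx_def]
          field_simp
  · -- large x case
    have hmin : min 1 x = 1 := min_eq_left hx1
    have hterm : ∀ k ∈ range n, (a ^ (k + 1) - b ^ (k + 1)) ^ 2 ≤ (a ^ 2) ^ (k + 1) := by
      intro k _
      have h0 : 0 ≤ a ^ (k + 1) - b ^ (k + 1) :=
        sub_nonneg.2 (pow_le_pow_left₀ hb0.le hba _)
      have h1 : a ^ (k + 1) - b ^ (k + 1) ≤ a ^ (k + 1) := by
        have : 0 < b ^ (k + 1) := pow_pos hb0 _
        linarith
      calc (a ^ (k + 1) - b ^ (k + 1)) ^ 2 ≤ (a ^ (k + 1)) ^ 2 := pow_le_pow_left₀ h0 h1 2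
        _ = (a ^ 2) ^ (k + 1) := by ring
    have ha2 : a ^ 2 < 1 := by nlinarith
    have hsum : ∑ k ∈ range n, (a ^ 2) ^ (k + 1) ≤ a ^ 2 * (1 - a ^ 2)⁻¹ := by
      have : ∑ k ∈ range n, (a ^ 2) ^ (k + 1) = a ^ 2 * ∑ k ∈ range n, (a ^ 2) ^ k := by
        rw [Finset.mul_sum]
        exact Finset.sum_congr rfl fun k _ => by ring
      rw [this]
      apply mul_le_mul_of_nonneg_left (geom_sum_le_inv (by positivity) ha2 n) (by positivity)
    have hkey : a ^ 2 * (1 - a ^ 2)⁻¹ ≤ 1 / x := by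
      have h1 : 1 - a ^ 2 = (2 * x + x ^ 2) * a ^ 2 := by
        have hmul : a * (1 + x) = 1 := inv_mul_cancel₀ (ne_of_gt h1x)
        nlinarith
      rw [h1]
      rw [mul_inv, ← mul_assoc]
      have ha2pos : 0 < a ^ 2 := by positivity
      rw [mul_comm (a^2), mul_assoc, mul_inv_cancel₀ (ne_of_gt ha2pos), mul_one]
      rw [inv_eq_one_div]
      apply div_le_div_of_nonneg_left one_pos.le hx
      nlinarith
    have hS : ∑ k ∈ range n, (a ^ (k + 1) - b ^ (k + 1)) ^ 2 ≤ 1 / x :=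
      le_trans (le_trans (Finset.sum_le_sum hterm) hsum) hkey
    calc gam * ΔT * ∑ k ∈ range n, (a ^ (k + 1) - b ^ (k + 1)) ^ 2
        ≤ gam * ΔT * (1 / x) := by
          apply mul_le_mul_of_nonneg_left hS (by positivity)
      _ = gam / lam := by
          rw [hx_def]
          field_simp
      _ ≤ 8 * (gam / lam) * (min 1 x) ^ 2 := by
          rw [hmin]
          have : 0 < gam / lam := div_pos hgam hlam
          nlinarith
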